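/- Let X be a set and n ≥ 0. For m ≥ 0, write S^m(X) := X^m/Σ_m for the m-th symmetric power of the set X, and let P_n be the set of tuples (n_1,…,n_n) of non-negative integers with n_1·1 + n_2·2 + ⋯ + n_n·n = n. Let Σ_n act on X^n by permuting coordinates, and consider the extended quotient X^n/^ex Σ_n := {(σ, x) ∈ Σ_n × X^n : σ·x = x}/Σ_n, where Σ_n acts diagonally, by conjugation on the first factor. Then there is a bijection X^n/^ex Σ_n ≅ ∐_{(n_1,…,n_n) ∈ P_n} S^{n_1}(X) × S^{n_2}(X) × ⋯ × S^{n_n}(X). -/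

import Mathlib

set_option linter.unusedSectionVars false
set_option maxHeartbeats 1000000


open Equiv

/-- The setoid on `X^m` whose quotient is the `m`-th symmetric power of the set `X`. -/
def symSetoid (X : Type) (m : ℕ) : Setoid (Fin m → X) where
  r x y := ∃ σ : Equiv.Perm (Fin m), ∀ i, y i = x (σ i)
  iseqv := by
    constructor
    · exact fun x => ⟨1, fun i => rfl⟩
    · rintro x y ⟨σ, h⟩
      exact ⟨σ⁻¹, fun i => by rw [h (σ⁻¹ i)]; simp⟩
    · rintro x y z ⟨σ, h⟩ ⟨σ', h'⟩
      exact ⟨σ * σ', fun i => by rw [h' i, h (σ' i)]; simp⟩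

/-- The `m`-th symmetric power `S^m(X) = X^m / Σ_m` of a set `X`. -/
def SymPow (X : Type) (m : ℕ) : Type := Quotient (symSetoid X m)

/-- The inertia of the action of `Σ_n` on `X^n`: pairs `(σ, x)` with `σ • x = x`,
where `σ • x = x ∘ σ⁻¹`. -/
def InertiaPow (X : Type) (n : ℕ) : Type :=
  {p : Equiv.Perm (Fin n) × (Fin n → X) // ∀ i, p.2 (p.1⁻¹ i) = p.2 i}

/-- The setoid on the inertia whose quotient is the extended quotient `X^n /^ex Σ_n`:
`(σ, x) ∼ (τστ⁻¹, τ • x)`. -/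
def extSetoid (X : Type) (n : ℕ) : Setoid (InertiaPow X n) where
  r p q := ∃ τ : Equiv.Perm (Fin n), q.1.1 = τ * p.1.1 * τ⁻¹ ∧ ∀ i, q.1.2 i = p.1.2 (τ⁻¹ i)
  iseqv := by
    constructor
    · exact fun p => ⟨1, by simp, fun i => by simp⟩
    · rintro p q ⟨τ, h1, h2⟩
      refine ⟨τ⁻¹, by rw [h1]; group, fun i => ?_⟩
      rw [inv_inv, h2 (τ i)]
      simp
    · rintro p q r ⟨τ, h1, h2⟩ ⟨τ', h1', h2'⟩
      refine ⟨τ' * τ, by rw [h1', h1]; group, fun i => ?_⟩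
      rw [h2' i, h2 (τ'⁻¹ i)]
      simp [mul_inv_rev]

/-- The extended quotient `X^n /^ex Σ_n`. -/
def ExtQuotPow (X : Type) (n : ℕ) : Type := Quotient (extSetoid X n)

/-- The set of partitions of `n`, recorded as tuples `(n_1, …, n_n)` of non-negative
integers with `n_1·1 + n_2·2 + ⋯ + n_n·n = n`. -/
def PartTuples (n : ℕ) : Type := {v : Fin n → ℕ // ∑ i : Fin n, v i * (i.1 + 1) = n}

namespace Stmt18
open Finset Function


variable {X : Type}

section Basic
variable {α : Type} [Fintype α] [DecidableEq α]

lemma univ_val_map_comp_equiv {β : Type} [Fintype β] {Z : Type} (e : α ≃ β) (g : β → Z) :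
    (Multiset.map (g ∘ e) univ.val) = univ.val.map g := by
  rw [← Multiset.map_map]
  congr 1
  have : (univ.map e.toEmbedding).val = univ.val := by rw [Finset.univ_map_equiv_to_embedding]
  simpa [Finset.map_val] using this

lemma sc_iff {σ : Perm α} {i j : α} : σ.SameCycle i j ↔ ∃ k : ℕ, (σ ^ k) i = j := by
  constructor
  · intro h; obtain ⟨k, _, hk⟩ := h.exists_pow_eq'; exact ⟨k, hk⟩
  · rintro ⟨k, hk⟩; exact ⟨(k : ℤ), by simpa using hk⟩

lemma mem_pp (σ : Perm α) (i : α) : i ∈ periodicPts σ :=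
  ⟨orderOf σ, orderOf_pos σ, by
    simp only [IsPeriodicPt, IsFixedPt, ← Equiv.Perm.coe_pow, pow_orderOf_eq_one,
      Equiv.Perm.coe_one, id_eq]⟩

/-- orbit size -/
noncomputable def per (σ : Perm α) (i : α) : ℕ := minimalPeriod σ i

lemma per_pos (σ : Perm α) (i : α) : 0 < per σ i :=
  minimalPeriod_pos_of_mem_periodicPts (mem_pp σ i)

lemma pow_per (σ : Perm α) (i : α) : (σ ^ per σ i) i = i := isPeriodicPt_minimalPeriod σ i

lemma pow_mod_per (σ : Perm α) (i : α) (a : ℕ) : (σ ^ (a % per σ i)) i = (σ ^ a) i := by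
  simpa only [Equiv.Perm.coe_pow, per] using iterate_mod_minimalPeriod_eq (f := ⇑σ) (x := i) (n := a)

lemma pow_eq_pow_iff {σ : Perm α} {i : α} {a b : ℕ} :
    (σ ^ a) i = (σ ^ b) i ↔ a % per σ i = b % per σ i := by
  constructor
  · intro h
    have hmp : (σ ^ (a % per σ i)) i = (σ ^ (b % per σ i)) i := by
      rw [pow_mod_per σ i a, pow_mod_per σ i b, h]
    exact iterate_injOn_Iio_minimalPeriod (f := ⇑σ) (x := i)
      (Set.mem_Iio.2 (Nat.mod_lt _ (per_pos σ i))) (Set.mem_Iio.2 (Nat.mod_lt _ (per_pos σ i)))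
      (by simpa only [Equiv.Perm.coe_pow, per] using hmp)
  · intro h
    rw [← pow_mod_per σ i a, ← pow_mod_per σ i b, h]

lemma per_sc {σ : Perm α} {i j : α} (h : σ.SameCycle i j) : per σ i = per σ j := by
  obtain ⟨k, rfl⟩ := sc_iff.1 h
  simpa only [per, Equiv.Perm.coe_pow] using (minimalPeriod_apply_iterate (mem_pp σ i) k).symm

lemma semiconj_pow {β : Type} {σ : Perm α} {τ : Perm β}
    {φ : α → β} (hsc : ∀ i, τ (φ i) = φ (σ i)) (k : ℕ) (j : α) :
    (τ ^ k) (φ j) = φ ((σ ^ k) j) := by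
  induction k generalizing j with
  | zero => simp
  | succ k ih =>
    rw [pow_succ, pow_succ]
    simp only [Equiv.Perm.coe_mul, comp_apply]
    rw [hsc j, ih (σ j)]

/-- transfer of periods along a semiconjugating injection -/
lemma per_semiconj {β : Type} [Fintype β] [DecidableEq β] {σ : Perm α} {τ : Perm β}
    {φ : α → β} (hinj : Function.Injective φ) (hsc : ∀ i, τ (φ i) = φ (σ i)) (i : α) :
    per τ (φ i) = per σ i := by
  refine le_antisymm ?_ ?_
  · refine IsPeriodicPt.minimalPeriod_le (per_pos σ i) ?_
    show IsPeriodicPt _ _ _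
    unfold IsPeriodicPt IsFixedPt
    rw [← Equiv.Perm.coe_pow, semiconj_pow hsc, pow_per]
  · refine IsPeriodicPt.minimalPeriod_le (per_pos τ (φ i)) ?_
    show IsPeriodicPt _ _ _
    unfold IsPeriodicPt IsFixedPt
    rw [← Equiv.Perm.coe_pow]
    apply hinj
    rw [← semiconj_pow hsc, pow_per]

lemma sc_semiconj {β : Type} [Fintype β] [DecidableEq β] {σ : Perm α} {τ : Perm β}
    {φ : α → β} (hinj : Function.Injective φ) (hsc : ∀ i, τ (φ i) = φ (σ i)) (i j : α) :
    τ.SameCycle (φ i) (φ j) ↔ σ.SameCycle i j := by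
  rw [sc_iff, sc_iff]
  constructor
  · rintro ⟨k, hk⟩; exact ⟨k, hinj (by rw [← semiconj_pow hsc, hk])⟩
  · rintro ⟨k, hk⟩; exact ⟨k, by rw [semiconj_pow hsc, hk]⟩

lemma x_pow_eq {σ : Perm α} {x : α → X} (hx : ∀ i, x (σ i) = x i) (k : ℕ) (i : α) :
    x ((σ ^ k) i) = x i := by
  induction k with
  | zero => simp
  | succ k ih => rw [pow_succ', Equiv.Perm.coe_mul, comp_apply, hx, ih]

lemma x_sc {σ : Perm α} {x : α → X} (hx : ∀ i, x (σ i) = x i) {i j : α}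
    (h : σ.SameCycle i j) : x i = x j := by
  obtain ⟨k, rfl⟩ := sc_iff.1 h
  rw [x_pow_eq hx]

end Basic



lemma perm_exists_equiv {Z : Type} {l₁ l₂ : List Z} (h : l₁.Perm l₂) :
    ∃ e : Fin l₁.length ≃ Fin l₂.length, ∀ i, l₁.get i = l₂.get (e i) := by
  induction h with
  | nil => exact ⟨Equiv.refl _, fun i => i.elim0⟩
  | cons x h ih =>
    obtain ⟨e, he⟩ := ih
    refine ⟨(finSuccEquiv _).trans ((Equiv.optionCongr e).trans (finSuccEquiv _).symm),
      fun i => ?_⟩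
    refine Fin.cases ?_ (fun j => ?_) i
    · simp
    · simpa using he j
  | swap x y l =>
    refine ⟨Equiv.swap ⟨0, by simp⟩ ⟨1, by simp⟩, fun i => ?_⟩
    rcases i with ⟨iv, hv⟩
    match iv, hv with
    | 0, hv => rfl
    | 1, hv => rfl
    | (k+2), hv => rfl
  | trans h₁ h₂ ih₁ ih₂ =>
    obtain ⟨e₁, he₁⟩ := ih₁
    obtain ⟨e₂, he₂⟩ := ih₂
    exact ⟨e₁.trans e₂, fun i => (he₁ i).trans (he₂ _)⟩

lemma exists_equiv_of_map_univ_eq {A B Z : Type} [Fintype A] [DecidableEq A] [Fintype B]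
    [DecidableEq B] {f : A → Z} {g : B → Z}
    (h : (univ.val.map f : Multiset Z) = univ.val.map g) : ∃ e : A ≃ B, ∀ a, f a = g (e a) := by
  classical
  set lA := (univ : Finset A).toList with hlA
  set lB := (univ : Finset B).toList with hlB
  have hperm : (lA.map f).Perm (lB.map g) := by
    rw [← Multiset.coe_eq_coe]
    have h1 : ((lA.map f : List Z) : Multiset Z) = (↑lA : Multiset A).map f := by simp
    have h2 : ((lB.map g : List Z) : Multiset Z) = (↑lB : Multiset B).map g := by simp
    rw [h1, h2, hlA, hlB, Finset.coe_toList, Finset.coe_toList, h]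
  obtain ⟨e0, he0⟩ := perm_exists_equiv hperm
  have hA : lA.length = (lA.map f).length := (List.length_map _).symm
  have hB : (lB.map g).length = lB.length := List.length_map _
  set eA : Fin lA.length ≃ A :=
    List.Nodup.getEquivOfForallMemList lA (Finset.nodup_toList _)
      (fun a => Finset.mem_toList.2 (mem_univ a)) with heA
  set eB : Fin lB.length ≃ B :=
    List.Nodup.getEquivOfForallMemList lB (Finset.nodup_toList _)
      (fun b => Finset.mem_toList.2 (mem_univ b)) with heB
  refine ⟨((eA.symm.trans (finCongr hA)).trans (e0.trans (finCongr hB))).trans eB, fun a => ?_⟩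
  simp only [Equiv.trans_apply]
  set i := eA.symm a with hi
  have ha : lA.get i = a := by
    have h1 : eA i = lA.get i := by rw [heA]; rfl
    rw [← h1, hi, eA.apply_symm_apply]
  have key := he0 (finCongr hA i)
  have k1 : (lA.map f).get (finCongr hA i) = f (lA.get i) := by
    simp [List.getElem_map]
  have k2 : (lB.map g).get (e0 (finCongr hA i))
      = g (lB.get (finCongr hB (e0 (finCongr hA i)))) := by
    simp [List.getElem_map]
  have k3 : eB (finCongr hB (e0 (finCongr hA i))) = lB.get (finCongr hB (e0 (finCongr hA i))) := by
    rw [heB]; rfl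
  rw [← ha, ← k1, key, k2, k3]

section Orb
variable {X : Type}
variable {α : Type} [Fintype α] [DecidableEq α]

-- Orbit quotient
def QOrb (σ : Perm α) : Type := Quotient (Equiv.Perm.SameCycle.setoid σ)

def qmk (σ : Perm α) (i : α) : QOrb σ := Quotient.mk _ i

instance QOrb.decEq (σ : Perm α) : DecidableEq (QOrb σ) :=
  @Quotient.decidableEq α (Equiv.Perm.SameCycle.setoid σ)
    (fun i j => decidable_of_iff (σ.SameCycle i j) Iff.rfl)

instance QOrb.fintype (σ : Perm α) : Fintype (QOrb σ) :=
  @Quotient.fintype α _ (Equiv.Perm.SameCycle.setoid σ)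
    (fun i j => decidable_of_iff (σ.SameCycle i j) Iff.rfl)

lemma qmk_out (σ : Perm α) (o : QOrb σ) : qmk σ o.out = o := Quotient.out_eq o

lemma qmk_eq_iff {σ : Perm α} {i j : α} : qmk σ i = qmk σ j ↔ σ.SameCycle i j := by
  constructor
  · exact fun h => Quotient.exact h
  · exact fun h => Quotient.sound h

lemma sc_out {σ : Perm α} (i : α) : σ.SameCycle ((qmk σ i).out) i :=
  Quotient.exact (Quotient.out_eq (qmk σ i))

noncomputable def orbData (σ : Perm α) (x : α → X) (hx : ∀ i, x (σ i) = x i) : QOrb σ → ℕ × X :=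
  Quotient.lift (fun i => (per σ i - 1, x i)) (fun i j h => by
    have h' : σ.SameCycle i j := h
    show (per σ i - 1, x i) = (per σ j - 1, x j)
    rw [per_sc h', x_sc hx h'])

lemma orbData_mk (σ : Perm α) (x : α → X) (hx : ∀ i, x (σ i) = x i) (i : α) :
    orbData σ x hx (qmk σ i) = (per σ i - 1, x i) := rfl

lemma orbData_out (σ : Perm α) (x : α → X) (hx : ∀ i, x (σ i) = x i) (q : QOrb σ) :
    orbData σ x hx q = (per σ q.out - 1, x q.out) := by
  conv_lhs => rw [← qmk_out σ q]
  rfl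

noncomputable def Fmul (σ : Perm α) (x : α → X) (hx : ∀ i, x (σ i) = x i) : Multiset (ℕ × X) :=
  (univ : Finset (QOrb σ)).val.map (orbData σ x hx)

lemma card_fiber (σ : Perm α) (r : α) :
    ((univ : Finset α).filter (fun i => qmk σ i = qmk σ r)).card = per σ r := by
  classical
  set L := (List.range (per σ r)).map (fun t => (σ ^ t) r) with hL
  have hnd : L.Nodup := by
    rw [hL]
    refine (List.nodup_map_iff_inj_on List.nodup_range).2 ?_ -- check name
    intro t ht u hu htu
    rw [List.mem_range] at ht hu
    have := pow_eq_pow_iff.1 htu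
    rwa [Nat.mod_eq_of_lt ht, Nat.mod_eq_of_lt hu] at this
  have hfil : (univ : Finset α).filter (fun i => qmk σ i = qmk σ r) = L.toFinset := by
    ext j
    simp only [mem_filter, mem_univ, true_and, List.mem_toFinset, hL, List.mem_map,
      List.mem_range]
    rw [qmk_eq_iff]
    constructor
    · intro h
      obtain ⟨k, hk⟩ := sc_iff.1 h.symm
      exact ⟨k % per σ r, Nat.mod_lt _ (per_pos σ r), by rw [pow_mod_per, hk]⟩
    · rintro ⟨t, _, rfl⟩
      exact (sc_iff.2 ⟨t, rfl⟩).symm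
  rw [hfil, List.toFinset_card_of_nodup hnd, hL, List.length_map, List.length_range]

lemma Fmul_sum (σ : Perm α) (x : α → X) (hx : ∀ i, x (σ i) = x i) :
    ((Fmul σ x hx).map (fun p => p.1 + 1)).sum = Fintype.card α := by
  classical
  rw [Fmul, Multiset.map_map]
  have h1 : ∀ o : QOrb σ, ((fun p : ℕ × X => p.1 + 1) ∘ orbData σ x hx) o
      = ((univ : Finset α).filter (fun i => qmk σ i = o)).card := by
    intro o
    obtain ⟨r, rfl⟩ : ∃ r, qmk σ r = o := ⟨o.out, qmk_out σ o⟩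
    rw [comp_apply, orbData_mk, card_fiber]
    exact Nat.succ_pred_eq_of_pos (per_pos σ r)
  rw [Multiset.map_congr rfl (fun o _ => h1 o)]
  have h2 := Finset.card_eq_sum_card_fiberwise
    (f := fun i : α => qmk σ i) (s := univ) (t := univ) (fun i _ => mem_univ _)
  rw [Finset.card_univ] at h2
  exact h2.symm

/-- transport of orbit quotients along a semiconjugating bijection -/
def QOrbCongr {β : Type} [Fintype β] [DecidableEq β] (e : α ≃ β) (σ : Perm α) (τ : Perm β)
    (hconj : ∀ i, τ (e i) = e (σ i)) : QOrb σ ≃ QOrb τ where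
  toFun := Quotient.lift (fun i => qmk τ (e i)) (fun i j h => by
    apply qmk_eq_iff.2
    exact (sc_semiconj e.injective hconj i j).2 h)
  invFun := Quotient.lift (fun j => qmk σ (e.symm j)) (fun i j h => by
    apply qmk_eq_iff.2
    refine (sc_semiconj e.symm.injective (fun j => ?_) i j).2 h
    apply e.injective
    rw [← hconj, e.apply_symm_apply, e.apply_symm_apply])
  left_inv := fun o => Quotient.inductionOn o (fun i => by
    show qmk σ (e.symm (e i)) = qmk σ i
    rw [e.symm_apply_apply])
  right_inv := fun o => Quotient.inductionOn o (fun j => by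
    show qmk τ (e (e.symm j)) = qmk τ j
    rw [e.apply_symm_apply])

lemma QOrbCongr_mk {β : Type} [Fintype β] [DecidableEq β] (e : α ≃ β) (σ : Perm α) (τ : Perm β)
    (hconj : ∀ i, τ (e i) = e (σ i)) (i : α) :
    QOrbCongr e σ τ hconj (qmk σ i) = qmk τ (e i) := rfl

/-- transfer of `Fmul` along a bijection -/
lemma Fmul_transfer {β : Type} [Fintype β] [DecidableEq β] (e : α ≃ β) {σ : Perm α} {τ : Perm β}
    {x : α → X} {y : β → X} (hx : ∀ i, x (σ i) = x i) (hy : ∀ j, y (τ j) = y j)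
    (hconj : ∀ i, τ (e i) = e (σ i)) (hxy : ∀ i, y (e i) = x i) :
    Fmul τ y hy = Fmul σ x hx := by
  have hcomp : orbData τ y hy ∘ (QOrbCongr e σ τ hconj) = orbData σ x hx := by
    funext o
    refine Quotient.inductionOn o (fun i => ?_)
    show orbData τ y hy (QOrbCongr e σ τ hconj (qmk σ i)) = orbData σ x hx (qmk σ i)
    rw [QOrbCongr_mk, orbData_mk, orbData_mk, per_semiconj e.injective hconj, hxy]
  rw [Fmul, Fmul, ← hcomp, univ_val_map_comp_equiv]


section SumPart
variable {β : Type} [Fintype β] [DecidableEq β]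

lemma sumCongr_inl (σ : Perm α) (τ : Perm β) (i : α) :
    (Equiv.sumCongr σ τ) (Sum.inl i) = Sum.inl (σ i) := rfl

lemma sumCongr_inr (σ : Perm α) (τ : Perm β) (j : β) :
    (Equiv.sumCongr σ τ) (Sum.inr j) = Sum.inr (τ j) := rfl

lemma sc_sum_inl_inr (σ : Perm α) (τ : Perm β) (i : α) (j : β) :
    ¬ Equiv.Perm.SameCycle (Equiv.sumCongr σ τ) (Sum.inl i) (Sum.inr j) := by
  rw [sc_iff]
  rintro ⟨k, hk⟩
  rw [semiconj_pow (fun i' => sumCongr_inl σ τ i') k i] at hk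
  simp at hk

lemma sc_sum_inr_inl (σ : Perm α) (τ : Perm β) (j : β) (i : α) :
    ¬ Equiv.Perm.SameCycle (Equiv.sumCongr σ τ) (Sum.inr j) (Sum.inl i) := by
  rw [sc_iff]
  rintro ⟨k, hk⟩
  rw [semiconj_pow (fun j' => sumCongr_inr σ τ j') k j] at hk
  simp at hk

def QOrbSum (σ : Perm α) (τ : Perm β) : QOrb σ ⊕ QOrb τ ≃ QOrb (Equiv.sumCongr σ τ) where
  toFun := Sum.elim
    (Quotient.lift (fun i => qmk (Equiv.sumCongr σ τ) (Sum.inl i)) (fun i j h =>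
      qmk_eq_iff.2 ((sc_semiconj Sum.inl_injective (fun i' => sumCongr_inl σ τ i') i j).2 h)))
    (Quotient.lift (fun j => qmk (Equiv.sumCongr σ τ) (Sum.inr j)) (fun i j h =>
      qmk_eq_iff.2 ((sc_semiconj Sum.inr_injective (fun j' => sumCongr_inr σ τ j') i j).2 h)))
  invFun := Quotient.lift
    (fun s => Sum.rec (fun i => Sum.inl (qmk σ i)) (fun j => Sum.inr (qmk τ j)) s)
    (fun s s' h => by
      rcases s with i | j <;> rcases s' with i' | j'
      · exact congrArg Sum.inl (qmk_eq_iff.2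
          ((sc_semiconj Sum.inl_injective (fun i'' => sumCongr_inl σ τ i'') i i').1 h))
      · exact absurd h (sc_sum_inl_inr σ τ i j')
      · exact absurd h (sc_sum_inr_inl σ τ j i')
      · exact congrArg Sum.inr (qmk_eq_iff.2
          ((sc_semiconj Sum.inr_injective (fun j'' => sumCongr_inr σ τ j'') j j').1 h)))
  left_inv := fun s => by
    rcases s with o | o
    · exact Quotient.inductionOn o (fun i => rfl)
    · exact Quotient.inductionOn o (fun j => rfl)
  right_inv := fun o => Quotient.inductionOn o (fun s => by rcases s with i | j <;> rfl)

lemma Fmul_sumCongr (σ : Perm α) (τ : Perm β)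
    (x : α → X) (y : β → X) (hx : ∀ i, x (σ i) = x i) (hy : ∀ j, y (τ j) = y j)
    (hxy : ∀ s, Sum.elim x y ((Equiv.sumCongr σ τ) s) = Sum.elim x y s) :
    Fmul (Equiv.sumCongr σ τ) (Sum.elim x y) hxy = Fmul σ x hx + Fmul τ y hy := by
  rw [Fmul, ← univ_val_map_comp_equiv (QOrbSum σ τ) (orbData _ _ hxy)]
  have huniv : (univ : Finset (QOrb σ ⊕ QOrb τ)).val
      = (univ : Finset (QOrb σ)).val.map Sum.inl + (univ : Finset (QOrb τ)).val.map Sum.inr := by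
    rw [← Finset.univ_disjSum_univ, Finset.val_disjSum]
    rfl
  rw [huniv, Multiset.map_add, Multiset.map_map, Multiset.map_map]
  congr 1
  · rw [Fmul]
    apply Multiset.map_congr rfl
    intro o _
    refine Quotient.inductionOn o (fun i => ?_)
    show orbData _ _ hxy (QOrbSum σ τ (Sum.inl (qmk σ i))) = orbData σ x hx (qmk σ i)
    have h1 : QOrbSum σ τ (Sum.inl (qmk σ i)) = qmk (Equiv.sumCongr σ τ) (Sum.inl i) := rfl
    rw [h1, orbData_mk, orbData_mk,
      per_semiconj Sum.inl_injective (fun i' => sumCongr_inl σ τ i')]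
    rfl
  · rw [Fmul]
    apply Multiset.map_congr rfl
    intro o _
    refine Quotient.inductionOn o (fun j => ?_)
    show orbData _ _ hxy (QOrbSum σ τ (Sum.inr (qmk τ j))) = orbData τ y hy (qmk τ j)
    have h1 : QOrbSum σ τ (Sum.inr (qmk τ j)) = qmk (Equiv.sumCongr σ τ) (Sum.inr j) := rfl
    rw [h1, orbData_mk, orbData_mk,
      per_semiconj Sum.inr_injective (fun j' => sumCongr_inr σ τ j')]
    rfl

end SumPart

section Rotate
open Fin.NatCast

lemma finRotate_pow (k : ℕ) (t : ℕ) (i : Fin (k + 1)) :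
    ((finRotate (k + 1)) ^ t) i = i + (t : Fin (k + 1)) := by
  induction t with
  | zero => simp
  | succ t ih =>
    rw [pow_succ', Equiv.Perm.coe_mul, comp_apply, ih, finRotate_succ_apply]
    rw [Nat.cast_add, Nat.cast_one, add_assoc]

lemma per_finRotate (k : ℕ) (i : Fin (k + 1)) : per (finRotate (k + 1)) i = k + 1 := by
  refine le_antisymm ?_ ?_
  · refine Function.IsPeriodicPt.minimalPeriod_le (Nat.succ_pos k) ?_
    show IsPeriodicPt _ _ _
    unfold IsPeriodicPt IsFixedPt
    rw [← Equiv.Perm.coe_pow, finRotate_pow]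
    simp
  · by_contra hlt
    push_neg at hlt
    have h1 := pow_per (finRotate (k + 1)) i
    rw [finRotate_pow] at h1
    have h2 : ((per (finRotate (k + 1)) i : ℕ) : Fin (k + 1)) = 0 := by
      have := congrArg (fun z => z - i) h1
      simpa using this
    rw [Fin.natCast_eq_zero] at h2
    have := Nat.le_of_dvd (per_pos _ i) h2
    omega

lemma sc_finRotate (k : ℕ) (i j : Fin (k + 1)) : (finRotate (k + 1)).SameCycle i j := by
  refine sc_iff.2 ⟨(j - i).val, ?_⟩
  rw [finRotate_pow, Fin.cast_val_eq_self, add_sub_cancel]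

lemma Fmul_rotate (k : ℕ) (a : X) (h : ∀ i, (fun _ : Fin (k+1) => a) ((finRotate (k+1)) i)
    = (fun _ : Fin (k+1) => a) i) :
    Fmul (finRotate (k + 1)) (fun _ => a) h = {(k, a)} := by
  have huniv : (univ : Finset (QOrb (finRotate (k + 1)))) = {qmk (finRotate (k+1)) 0} := by
    ext o
    simp only [mem_univ, Finset.mem_singleton, true_iff]
    exact Quotient.inductionOn o (fun i => qmk_eq_iff.2 (sc_finRotate k i 0))
  rw [Fmul, huniv]
  simp only [Finset.singleton_val, Multiset.map_singleton]
  rw [orbData_mk, per_finRotate]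
  simp

end Rotate


section Realize

lemma Fmul_cast {m m' : ℕ} (h : m = m') (σ : Equiv.Perm (Fin m)) (x : Fin m → X)
    (hx : ∀ i, x (σ i) = x i) :
    ∃ (σ₁ : Equiv.Perm (Fin m')) (x₁ : Fin m' → X) (hx₁ : ∀ i, x₁ (σ₁ i) = x₁ i),
      Fmul σ₁ x₁ hx₁ = Fmul σ x hx := by
  subst h; exact ⟨σ, x, hx, rfl⟩

lemma Fmul_build {m : ℕ} (k : ℕ) (a : X) (σ' : Equiv.Perm (Fin m)) (x' : Fin m → X)
    (hx' : ∀ i, x' (σ' i) = x' i) :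
    ∃ (σ : Equiv.Perm (Fin (k + 1 + m))) (x : Fin (k + 1 + m) → X) (hx : ∀ i, x (σ i) = x i),
      Fmul σ x hx = (k, a) ::ₘ Fmul σ' x' hx' := by
  have hx₀ : ∀ s, (Sum.elim (fun _ : Fin (k+1) => a) x')
      ((Equiv.sumCongr (finRotate (k+1)) σ') s)
      = (Sum.elim (fun _ : Fin (k+1) => a) x') s := by
    rintro (i | j)
    · rfl
    · exact hx' j
  have e : (Fin (k+1) ⊕ Fin m) ≃ Fin (k + 1 + m) := finSumFinEquiv
  refine ⟨(e.symm.trans (Equiv.sumCongr (finRotate (k+1)) σ')).trans e,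
    (Sum.elim (fun _ : Fin (k+1) => a) x') ∘ e.symm, fun i => ?_, ?_⟩
  · show (Sum.elim (fun _ : Fin (k+1) => a) x')
        (e.symm (e ((Equiv.sumCongr (finRotate (k+1)) σ') (e.symm i))))
      = (Sum.elim (fun _ : Fin (k+1) => a) x') (e.symm i)
    rw [e.symm_apply_apply, hx₀]
  · have hconj : ∀ s, ((e.symm.trans (Equiv.sumCongr (finRotate (k+1)) σ')).trans e) (e s)
        = e ((Equiv.sumCongr (finRotate (k+1)) σ') s) := by
      intro s
      simp [Equiv.trans_apply]
    have hxy : ∀ s, ((Sum.elim (fun _ : Fin (k+1) => a) x') ∘ e.symm) (e s)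
        = (Sum.elim (fun _ : Fin (k+1) => a) x') s := by
      intro s
      simp only [comp_apply, e.symm_apply_apply]
    rw [Fmul_transfer e hx₀ _ hconj hxy,
      Fmul_sumCongr _ _ _ _ (fun i => rfl) hx' hx₀, Fmul_rotate, Multiset.singleton_add]

lemma exists_Fmul_eq (l : List (ℕ × X)) :
    ∃ (σ : Equiv.Perm (Fin ((l.map (fun p => p.1 + 1)).sum)))
      (x : Fin ((l.map (fun p => p.1 + 1)).sum) → X)
      (hx : ∀ i, x (σ i) = x i), Fmul σ x hx = (l : Multiset (ℕ × X)) := by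
  induction l with
  | nil =>
    refine ⟨1, fun i => i.elim0, fun i => rfl, ?_⟩
    have he : IsEmpty (QOrb (1 : Equiv.Perm (Fin ((List.nil.map
        (fun p : ℕ × X => p.1 + 1)).sum)))) :=
      ⟨fun o => Quotient.inductionOn o (fun i => i.elim0)⟩
    unfold Fmul; rw [Finset.univ_eq_empty]
    rfl
  | cons p l ih =>
    obtain ⟨σ', x', hx', hF⟩ := ih
    obtain ⟨k, a⟩ := p
    obtain ⟨σ₀, x₀, hx₀, hF₀⟩ := Fmul_build k a σ' x' hx'
    have hsum : (k + 1 + (l.map (fun p : ℕ × X => p.1 + 1)).sum)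
        = ((((k, a) :: l).map (fun p : ℕ × X => p.1 + 1)).sum) := by simp
    obtain ⟨σ₁, x₁, hx₁, hF₁⟩ := Fmul_cast hsum σ₀ x₀ hx₀
    refine ⟨σ₁, x₁, hx₁, ?_⟩
    rw [hF₁, hF₀, hF, Multiset.cons_coe]

end Realize

section Inj
variable {β : Type} [Fintype β] [DecidableEq β]

lemma exists_texp (σ : Equiv.Perm α) (i : α) : ∃ t : ℕ, (σ ^ t) ((qmk σ i).out) = i :=
  sc_iff.1 (sc_out i)

noncomputable def texp (σ : Equiv.Perm α) (i : α) : ℕ := Nat.find (exists_texp σ i)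

lemma texp_spec (σ : Equiv.Perm α) (i : α) : (σ ^ texp σ i) ((qmk σ i).out) = i :=
  Nat.find_spec (exists_texp σ i)

/-- the matching function built from a correspondence of orbits -/
noncomputable def matchFun (σ : Equiv.Perm α) (τ : Equiv.Perm β)
    (b : QOrb σ → QOrb τ) : α → β :=
  fun i => (τ ^ texp σ i) ((b (qmk σ i)).out)

lemma qmk_matchFun (σ : Equiv.Perm α) (τ : Equiv.Perm β) (b : QOrb σ → QOrb τ) (i : α) :
    qmk τ (matchFun σ τ b i) = b (qmk σ i) := by
  rw [matchFun]
  have h1 : qmk τ ((τ ^ texp σ i) ((b (qmk σ i)).out)) = qmk τ ((b (qmk σ i)).out) :=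
    qmk_eq_iff.2 (sc_iff.2 ⟨texp σ i, rfl⟩).symm
  rw [h1, qmk_out]

lemma matchFun_left_inv (σ : Equiv.Perm α) (τ : Equiv.Perm β) (b : QOrb σ ≃ QOrb τ)
    (hper : ∀ o : QOrb σ, per τ (b o).out = per σ o.out) (i : α) :
    matchFun τ σ b.symm (matchFun σ τ b i) = i := by
  set j := matchFun σ τ b i with hj
  have hq : qmk τ j = b (qmk σ i) := qmk_matchFun σ τ b i
  have hq' : b.symm (qmk τ j) = qmk σ i := by rw [hq, b.symm_apply_apply]
  have hout : (qmk τ j).out = (b (qmk σ i)).out := congrArg Quotient.out hq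
  -- j = τ ^ texp σ i applied to (b (qmk σ i)).out
  have hTj : (τ ^ texp τ j) ((b (qmk σ i)).out) = j := by
    rw [← hout]; exact texp_spec τ j
  have hTj' : (τ ^ texp σ i) ((b (qmk σ i)).out) = j := hj ▸ rfl
  have hmod : texp τ j % per σ (qmk σ i).out = texp σ i % per σ (qmk σ i).out := by
    rw [← hper (qmk σ i)]
    exact pow_eq_pow_iff.1 (hTj.trans hTj'.symm)
  show (σ ^ texp τ j) ((b.symm (qmk τ j)).out) = i
  rw [hq']
  rw [← pow_mod_per σ ((qmk σ i).out) (texp τ j), hmod, pow_mod_per]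
  exact texp_spec σ i

lemma Fmul_inj {σ : Equiv.Perm α} {τ : Equiv.Perm β} {x : α → X} {y : β → X}
    (hx : ∀ i, x (σ i) = x i) (hy : ∀ j, y (τ j) = y j)
    (h : Fmul σ x hx = Fmul τ y hy) :
    ∃ e : α ≃ β, (∀ i, τ (e i) = e (σ i)) ∧ (∀ i, y (e i) = x i) := by
  obtain ⟨b, hb⟩ := exists_equiv_of_map_univ_eq (f := orbData σ x hx) (g := orbData τ y hy) h
  have hdata : ∀ o : QOrb σ, (per σ o.out - 1, x o.out) = (per τ (b o).out - 1, y (b o).out) :=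
    fun o => (orbData_out σ x hx o).symm.trans ((hb o).trans (orbData_out τ y hy (b o)))
  have hper : ∀ o : QOrb σ, per τ (b o).out = per σ o.out := by
    intro o
    have h1 := congrArg Prod.fst (hdata o)
    simp only at h1
    have p1 := per_pos σ o.out
    have p2 := per_pos τ (b o).out
    omega
  have hval : ∀ o : QOrb σ, y (b o).out = x o.out := fun o =>
    (congrArg Prod.snd (hdata o)).symm
  have hper' : ∀ o : QOrb τ, per σ (b.symm o).out = per τ o.out := by
    intro o
    have h2 := hper (b.symm o)
    rw [b.apply_symm_apply] at h2
    exact h2.symm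
  set E : α ≃ β :=
    { toFun := matchFun σ τ b
      invFun := matchFun τ σ b.symm
      left_inv := matchFun_left_inv σ τ b hper
      right_inv := matchFun_left_inv τ σ b.symm hper' } with hE
  refine ⟨E, fun i => ?_, fun i => ?_⟩
  · -- conjugation
    show τ (matchFun σ τ b i) = matchFun σ τ b (σ i)
    have hq : qmk σ (σ i) = qmk σ i := qmk_eq_iff.2 (sc_iff.2 ⟨1, by rw [pow_one]⟩).symm
    rw [matchFun, matchFun, hq]
    set r := (qmk σ i).out with hr
    set r' := (b (qmk σ i)).out with hr'
    have hspec := texp_spec σ (σ i)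
    rw [show (qmk σ (σ i)).out = r from congrArg Quotient.out hq] at hspec
    have h1 : (σ ^ texp σ (σ i)) r = (σ ^ (texp σ i + 1)) r := by
      rw [hspec, pow_succ', Equiv.Perm.coe_mul, comp_apply, texp_spec]
    have h2 : texp σ (σ i) % per τ r' = (texp σ i + 1) % per τ r' := by
      rw [hper (qmk σ i)]
      exact pow_eq_pow_iff.1 h1
    calc τ ((τ ^ texp σ i) r') = (τ ^ (texp σ i + 1)) r' := by
          rw [pow_succ', Equiv.Perm.coe_mul, comp_apply]
      _ = (τ ^ (texp σ (σ i))) r' := by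
          rw [← pow_mod_per τ r' (texp σ i + 1), ← h2, pow_mod_per]
  · -- values
    show y (matchFun σ τ b i) = x i
    rw [matchFun, x_pow_eq hy, hval (qmk σ i)]
    conv_rhs => rw [← texp_spec σ i]
    rw [x_pow_eq hx]

end Inj

end Orb

section Assemble
variable {X : Type} {n : ℕ}

/-- multiset data type: multisets of (cycle length - 1, value) pairs with total length n -/
def MData (X : Type) (n : ℕ) : Type :=
  {s : Multiset (ℕ × X) // (s.map (fun p => p.1 + 1)).sum = n}

lemma inertia_inv (p : InertiaPow X n) : ∀ i, p.1.2 (p.1.1 i) = p.1.2 i := fun i => by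
  have h := p.2 (p.1.1 i)
  rw [Equiv.Perm.inv_def, Equiv.symm_apply_apply] at h
  exact h.symm

noncomputable def FI (p : InertiaPow X n) : MData X n :=
  ⟨Fmul p.1.1 p.1.2 (inertia_inv p), by rw [Fmul_sum]; simp⟩

lemma FI_resp (p q : InertiaPow X n) (h : (extSetoid X n).r p q) : FI p = FI q := by
  obtain ⟨τ, h1, h2⟩ := h
  apply Subtype.ext
  show Fmul p.1.1 p.1.2 _ = Fmul q.1.1 q.1.2 _
  refine (Fmul_transfer (τ : Equiv.Perm (Fin n)) (inertia_inv p) (inertia_inv q)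
    (fun i => ?_) (fun i => ?_)).symm
  · rw [h1]
    show (τ * p.1.1 * τ⁻¹) (τ i) = τ (p.1.1 i)
    simp [Equiv.Perm.mul_apply]
  · rw [h2 (τ i)]
    simp

noncomputable def extToM : ExtQuotPow X n → MData X n :=
  Quotient.lift FI FI_resp

lemma extToM_bij : Function.Bijective (extToM (X := X) (n := n)) := by
  constructor
  · intro a b
    refine Quotient.inductionOn₂ a b (fun p q h => ?_)
    have hval : Fmul p.1.1 p.1.2 (inertia_inv p) = Fmul q.1.1 q.1.2 (inertia_inv q) :=
      congrArg Subtype.val h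
    obtain ⟨e, hconj, hv⟩ := Fmul_inj (inertia_inv p) (inertia_inv q) hval
    apply Quotient.sound
    refine ⟨e, ?_, ?_⟩
    · refine Equiv.ext (fun j => ?_)
      show q.1.1 j = (e * p.1.1 * e⁻¹) j
      have := hconj (e⁻¹ j)
      rw [show e (e⁻¹ j) = j from Equiv.apply_symm_apply e j] at this
      exact this
    · intro i
      have := hv (e⁻¹ i)
      rw [show e (e⁻¹ i) = i from Equiv.apply_symm_apply e i] at this
      exact this
  · intro s
    set l := s.val.toList with hl
    have hcoe : (l : Multiset (ℕ × X)) = s.val := Multiset.coe_toList s.val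
    have hsum : (l.map (fun p => p.1 + 1)).sum = n := by
      have := s.2
      rw [← hcoe] at this
      simpa using this
    obtain ⟨σ, x, hx, hF⟩ := exists_Fmul_eq l
    obtain ⟨σ₁, x₁, hx₁, hF₁⟩ := Fmul_cast hsum σ x hx
    have hinv1 : ∀ i, x₁ (σ₁⁻¹ i) = x₁ i := by
      intro i
      have := hx₁ (σ₁⁻¹ i)
      rw [Equiv.Perm.inv_def, Equiv.apply_symm_apply] at this
      exact this.symm
    refine ⟨Quotient.mk _ (⟨(σ₁, x₁), hinv1⟩ : InertiaPow X n), ?_⟩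
    show FI _ = s
    apply Subtype.ext
    show Fmul σ₁ x₁ _ = s.val
    rw [show Fmul σ₁ x₁ (inertia_inv ⟨(σ₁, x₁), hinv1⟩) = Fmul σ₁ x₁ hx₁ from rfl,
      hF₁, hF, hcoe]

noncomputable def extEquivM : ExtQuotPow X n ≃ MData X n :=
  Equiv.ofBijective extToM extToM_bij

/-- symmetric power as multisets -/
def SymM (X : Type) (m : ℕ) : Type := {s : Multiset X // Multiset.card s = m}

noncomputable def spToM (m : ℕ) : SymPow X m → SymM X m :=
  Quotient.lift (fun x => (⟨(univ.val.map x : Multiset X), by simp⟩ : SymM X m))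
    (fun x y hxy => by
      obtain ⟨σ, hσ⟩ := hxy
      apply Subtype.ext
      show univ.val.map x = univ.val.map y
      have : univ.val.map y = univ.val.map (x ∘ σ) :=
        Multiset.map_congr rfl (fun i _ => hσ i)
      rw [this, univ_val_map_comp_equiv σ x])

lemma univ_val_map_get {Z : Type} (l : List Z) :
    (univ.val.map (fun i : Fin l.length => l.get i) : Multiset Z) = (l : Multiset Z) := by
  rw [Fin.univ_val_map]
  exact congrArg _ (List.ofFn_get l)

lemma spToM_bij (m : ℕ) : Function.Bijective (spToM (X := X) m) := by
  constructor
  · intro a b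
    refine Quotient.inductionOn₂ a b (fun x y h => ?_)
    have hval : (univ.val.map x : Multiset X) = univ.val.map y := congrArg Subtype.val h
    obtain ⟨e, he⟩ := exists_equiv_of_map_univ_eq hval
    apply Quotient.sound
    refine ⟨e.symm, fun i => ?_⟩
    have := he (e.symm i)
    rw [Equiv.apply_symm_apply] at this
    exact this.symm
  · intro s
    set l := s.val.toList with hl
    have hcoe : (l : Multiset X) = s.val := Multiset.coe_toList s.val
    have hlen : l.length = m := by
      rw [Multiset.length_toList]
      exact s.2
    refine ⟨Quotient.mk _ (fun i : Fin m => l.get (Fin.cast hlen.symm i)), ?_⟩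
    apply Subtype.ext
    show (univ.val.map (fun i : Fin m => l.get (Fin.cast hlen.symm i)) : Multiset X) = s.val
    have h1 : (fun i : Fin m => l.get (Fin.cast hlen.symm i))
        = (fun i : Fin l.length => l.get i) ∘ (finCongr hlen.symm) := rfl
    rw [h1, univ_val_map_comp_equiv (finCongr hlen.symm) (fun i : Fin l.length => l.get i),
      univ_val_map_get, hcoe]

noncomputable def spEquiv (m : ℕ) : SymPow X m ≃ SymM X m :=
  Equiv.ofBijective (spToM m) (spToM_bij m)

/-- fiber decomposition of a multiset of pairs -/
lemma sum_filter_fst (s : Multiset (ℕ × X)) (hs : ∀ p ∈ s, p.1 < n) :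
    (∑ j : Fin n, s.filter (fun p => p.1 = j.1)) = s := by
  induction s using Multiset.induction with
  | empty => simp
  | cons p s ih =>
    have hp : p.1 < n := hs p (Multiset.mem_cons_self p s)
    have hs' : ∀ q ∈ s, q.1 < n := fun q hq => hs q (Multiset.mem_cons_of_mem hq)
    simp only [Multiset.filter_cons]
    rw [Finset.sum_add_distrib, ih hs']
    congr 1
    have hcond : ∀ j : Fin n, (if p.1 = j.1 then ({p} : Multiset (ℕ × X)) else 0)
        = (if j = ⟨p.1, hp⟩ then ({p} : Multiset (ℕ × X)) else 0) := by
      intro j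
      apply if_congr _ rfl rfl
      constructor
      · intro h; exact Fin.ext h.symm
      · intro h; rw [h]
    rw [Finset.sum_congr rfl (fun j _ => hcond j), Finset.sum_ite_eq' univ (⟨p.1, hp⟩ : Fin n)
      (fun _ => ({p} : Multiset (ℕ × X)))]
    simp

lemma le_sum_of_mem_map {A : Type} (g : A → ℕ) (s : Multiset A) (a : A) (ha : a ∈ s) :
    g a ≤ (s.map g).sum := by
  obtain ⟨t, rfl⟩ := Multiset.exists_cons_of_mem ha
  simp

/-- bundled filter -/
def filterHom {Z : Type} (pred : Z → Prop) [DecidablePred pred] : Multiset Z →+ Multiset Z where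
  toFun := fun s => s.filter pred
  map_zero' := Multiset.filter_zero pred
  map_add' := fun a b => Multiset.filter_add pred a b

/-- bundled multiset sum -/
def sumHom : Multiset ℕ →+ ℕ where
  toFun := Multiset.sum
  map_zero' := Multiset.sum_zero
  map_add' := fun a b => Multiset.sum_add a b

/-- the map from tuples of symmetric powers to multiset data -/
noncomputable def GM : (Σ v : PartTuples n, ∀ i : Fin n, SymM X (v.1 i)) → MData X n :=
  fun vf => ⟨∑ i : Fin n, (vf.2 i).val.map (fun a => (i.1, a)), by
    show sumHom ((Multiset.mapAddMonoidHom (fun p : ℕ × X => p.1 + 1))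
      (∑ i : Fin n, (vf.2 i).val.map (fun a => (i.1, a)))) = n
    rw [map_sum (Multiset.mapAddMonoidHom (fun p : ℕ × X => p.1 + 1)), map_sum sumHom]
    have h2 : ∀ i : Fin n, sumHom ((Multiset.mapAddMonoidHom (fun p : ℕ × X => p.1 + 1))
        ((vf.2 i).val.map (fun a => (i.1, a)))) = vf.1.1 i * (i.1 + 1) := by
      intro i
      show (((vf.2 i).val.map (fun a => (i.1, a))).map (fun p : ℕ × X => p.1 + 1)).sum
        = vf.1.1 i * (i.1 + 1)
      rw [Multiset.map_map, show ((fun p : ℕ × X => p.1 + 1) ∘ (fun a : X => (i.1, a)))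
        = (fun _ : X => i.1 + 1) from rfl, Multiset.map_const', Multiset.sum_replicate,
        (vf.2 i).2, smul_eq_mul]
    rw [Finset.sum_congr rfl (fun i _ => h2 i)]
    exact vf.1.2⟩

lemma GM_filter (vf : Σ v : PartTuples n, ∀ i : Fin n, SymM X (v.1 i)) (j : Fin n) :
    (GM vf).val.filter (fun p => p.1 = j.1) = (vf.2 j).val.map (fun a => (j.1, a)) := by
  show (filterHom (fun p : ℕ × X => p.1 = j.1))
    (∑ i : Fin n, (vf.2 i).val.map (fun a => (i.1, a))) = _
  rw [map_sum]
  have h1 : ∀ i : Fin n, (filterHom (fun p : ℕ × X => p.1 = j.1))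
      ((vf.2 i).val.map (fun a => (i.1, a)))
      = if i = j then (vf.2 j).val.map (fun a => (j.1, a)) else 0 := by
    intro i
    show ((vf.2 i).val.map (fun a => (i.1, a))).filter (fun p => p.1 = j.1) = _
    by_cases hij : i = j
    · subst hij
      rw [if_pos rfl, Multiset.filter_eq_self]
      intro p hp
      obtain ⟨a, _, rfl⟩ := Multiset.mem_map.1 hp
      rfl
    · rw [if_neg hij, Multiset.filter_eq_nil]
      intro p hp
      obtain ⟨a, _, rfl⟩ := Multiset.mem_map.1 hp
      show ¬ (i.1 = j.1)
      exact fun hc => hij (Fin.ext hc)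
  rw [Finset.sum_congr rfl (fun i _ => h1 i), Finset.sum_ite_eq' univ j
    (fun _ => (vf.2 j).val.map (fun a => (j.1, a)))]
  simp

lemma GM_bij : Function.Bijective (GM (X := X) (n := n)) := by
  constructor
  · rintro ⟨v, f⟩ ⟨w, g⟩ h
    have hval : ∀ j : Fin n, (f j).val.map (fun a => (j.1, a))
        = (g j).val.map (fun a => (j.1, a)) := by
      intro j
      have h1 := GM_filter ⟨v, f⟩ j
      have h2 := GM_filter ⟨w, g⟩ j
      rw [← h1, ← h2, h]
    have hf : ∀ j : Fin n, (f j).val = (g j).val := by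
      intro j
      have := congrArg (Multiset.map Prod.snd) (hval j)
      rwa [Multiset.map_map, Multiset.map_map, show (Prod.snd ∘ fun a : X => (j.1, a)) = id
        from rfl, Multiset.map_id, Multiset.map_id] at this
    have hvw : v = w := by
      apply Subtype.ext
      funext j
      rw [← (f j).2, ← (g j).2, hf j]
    subst hvw
    exact congrArg (Sigma.mk v) (funext (fun j => Subtype.ext (hf j)))
  · intro s
    have hlt : ∀ p ∈ s.val, p.1 < n := by
      intro p hp
      have h1 : p.1 + 1 ≤ (s.val.map (fun p : ℕ × X => p.1 + 1)).sum :=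
        le_sum_of_mem_map (fun p : ℕ × X => p.1 + 1) s.val p hp
      rw [s.2] at h1
      omega
    set v : Fin n → ℕ := fun j => Multiset.card (s.val.filter (fun p => p.1 = j.1)) with hv
    have hvsum : ∑ i : Fin n, v i * (i.1 + 1) = n := by
      have h1 : ∀ j : Fin n, v j * (j.1 + 1)
          = ((s.val.filter (fun p => p.1 = j.1)).map (fun p : ℕ × X => p.1 + 1)).sum := by
        intro j
        have h2 : (s.val.filter (fun p => p.1 = j.1)).map (fun p : ℕ × X => p.1 + 1)
            = (s.val.filter (fun p => p.1 = j.1)).map (fun _ => j.1 + 1) := by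
          apply Multiset.map_congr rfl
          intro p hp
          rw [(Multiset.mem_filter.1 hp).2]
        rw [h2, Multiset.map_const', Multiset.sum_replicate, smul_eq_mul, hv]
      rw [Finset.sum_congr rfl (fun j _ => h1 j)]
      have e1 : ∑ j : Fin n, ((s.val.filter (fun p : ℕ × X => p.1 = j.1)).map
          (fun p : ℕ × X => p.1 + 1)).sum
          = ∑ j : Fin n, sumHom ((Multiset.mapAddMonoidHom (fun p : ℕ × X => p.1 + 1))
            (s.val.filter (fun p : ℕ × X => p.1 = j.1))) := rfl
      rw [e1, ← map_sum sumHom, ← map_sum (Multiset.mapAddMonoidHom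
        (fun p : ℕ × X => p.1 + 1)) _ univ, sum_filter_fst s.val hlt]
      exact s.2
    refine ⟨⟨⟨v, hvsum⟩, fun j => ⟨(s.val.filter (fun p => p.1 = j.1)).map Prod.snd,
      by rw [Multiset.card_map]⟩⟩, ?_⟩
    apply Subtype.ext
    show ∑ j : Fin n, ((s.val.filter (fun p => p.1 = j.1)).map Prod.snd).map
      (fun a => (j.1, a)) = s.val
    have h3 : ∀ j : Fin n, ((s.val.filter (fun p => p.1 = j.1)).map Prod.snd).map
        (fun a => (j.1, a)) = s.val.filter (fun p => p.1 = j.1) := by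
      intro j
      rw [Multiset.map_map]
      have : ∀ p ∈ s.val.filter (fun p : ℕ × X => p.1 = j.1),
          ((fun a : X => (j.1, a)) ∘ Prod.snd) p = id p := by
        intro p hp
        have := (Multiset.mem_filter.1 hp).2
        show (j.1, p.2) = p
        rw [← this]
      rw [Multiset.map_congr rfl this, Multiset.map_id]
    rw [Finset.sum_congr rfl (fun j _ => h3 j), sum_filter_fst s.val hlt]

noncomputable def GMEquiv : (Σ v : PartTuples n, ∀ i : Fin n, SymM X (v.1 i)) ≃ MData X n :=
  Equiv.ofBijective GM GM_bij

end Assemble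

end Stmt18

/-- For a set `X` and `n ≥ 0` there is a bijection
`X^n /^ex Σ_n ≅ ∐_{(n_1,…,n_n) ∈ P_n} S^{n_1}(X) × S^{n_2}(X) × ⋯ × S^{n_n}(X)`. -/
theorem stmt_18 (X : Type) (n : ℕ) :
    Nonempty (ExtQuotPow X n ≃ Σ v : PartTuples n, ∀ i : Fin n, SymPow X (v.1 i)) := by
  refine ⟨Stmt18.extEquivM.trans (Equiv.trans Stmt18.GMEquiv.symm (Equiv.sigmaCongrRight (fun v => Equiv.piCongrRight (fun i => (Stmt18.spEquiv (v.1 i)).symm))))⟩
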